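/- There do not exist two distinct multi-indexes (ν₁,…,ν_{d-1}) and (μ₁,…,μ_{d-1}), both satisfying Noether's equations ∑ i²νᵢ = d² - 1 = ∑ i²μᵢ and ∑ iνᵢ = 3(d-1) = ∑ iμᵢ, such that the multiset of multiplicities of ν arises from that of μ by merging groups of points while preserving total fat-point length, i.e., such that there is a partition of the multiplicities {m_i} of ν into groups, each group {m_{i,j}}_j merging into a single multiplicity m'_i of μ with m'_i(m'_i+1)/2 = ∑_j m_{i,j}(m_{i,j}+1)/2, with at least one group of size ≥ 2. -/

import Mathlib

private lemma le_of_mul_succ_le {m n : ℕ} (h : m * (m + 1) ≤ n * (n + 1)) : m ≤ n := by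
  by_contra hc
  push_neg at hc
  nlinarith

private lemma lt_of_mul_succ_lt {m n : ℕ} (h : m * (m + 1) < n * (n + 1)) : m < n := by
  by_contra hc
  push_neg at hc
  nlinarith

private lemma sum_mult_eq (d r : ℕ) (ν : ℕ → ℕ) (a : Fin r → ℕ)
    (hν0 : ∀ k, k = 0 ∨ d ≤ k → ν k = 0) (ha1 : ∀ j, 1 ≤ a j)
    (haν : ∀ k, 1 ≤ k → (Finset.univ.filter fun j => a j = k).card = ν k) :
    ∑ j, a j = ∑ k ∈ Finset.Icc 1 (d - 1), k * ν k := by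
  classical
  have hmem : ∀ j : Fin r, j ∈ (Finset.univ : Finset (Fin r)) →
      a j ∈ Finset.Icc 1 (d - 1) := by
    intro j _
    rw [Finset.mem_Icc]
    refine ⟨ha1 j, ?_⟩
    by_contra hlt
    push_neg at hlt
    have hdle : d ≤ a j := by omega
    have hz : ν (a j) = 0 := hν0 _ (Or.inr hdle)
    have hcard := haν (a j) (ha1 j)
    rw [hz] at hcard
    have : j ∈ Finset.univ.filter fun j' => a j' = a j := by simp
    have := Finset.card_pos.mpr ⟨j, this⟩
    omega
  rw [← Finset.sum_fiberwise_of_maps_to hmem (fun j => a j)]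
  apply Finset.sum_congr rfl
  intro k hk
  rw [Finset.mem_Icc] at hk
  have : ∑ j ∈ Finset.univ.filter (fun j => a j = k), a j
      = ∑ j ∈ Finset.univ.filter (fun j => a j = k), k := by
    apply Finset.sum_congr rfl
    intro j hj
    exact (Finset.mem_filter.mp hj).2
  rw [this, Finset.sum_const, smul_eq_mul, haν k hk.1, Nat.mul_comm]

theorem stmt_13 (d : ℕ) (hd : 2 ≤ d) (ν μ : ℕ → ℕ)
    (hν0 : ∀ k, k = 0 ∨ d ≤ k → ν k = 0) (hμ0 : ∀ k, k = 0 ∨ d ≤ k → μ k = 0)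
    (hν1 : ∑ i ∈ Finset.Icc 1 (d - 1), i ^ 2 * ν i = d ^ 2 - 1)
    (hν2 : ∑ i ∈ Finset.Icc 1 (d - 1), i * ν i = 3 * (d - 1))
    (hμ1 : ∑ i ∈ Finset.Icc 1 (d - 1), i ^ 2 * μ i = d ^ 2 - 1)
    (hμ2 : ∑ i ∈ Finset.Icc 1 (d - 1), i * μ i = 3 * (d - 1))
    (hne : ν ≠ μ)
    -- the multiplicities of ν are the (a j), those of μ are the (b j)
    (r r' : ℕ) (a : Fin r → ℕ) (b : Fin r' → ℕ)
    (ha1 : ∀ j, 1 ≤ a j) (hb1 : ∀ j, 1 ≤ b j)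
    (haν : ∀ k, 1 ≤ k → (Finset.univ.filter fun j => a j = k).card = ν k)
    (hbμ : ∀ k, 1 ≤ k → (Finset.univ.filter fun j => b j = k).card = μ k)
    -- g groups the points of ν, each group merging to a single point of μ,
    -- preserving the fat-point length
    (g : Fin r → Fin r')
    (hmerge : ∀ i, b i * (b i + 1) / 2 =
        ∑ j ∈ Finset.univ.filter (fun j => g j = i), a j * (a j + 1) / 2)
    -- at least one group has size ≥ 2
    (hgroup : ¬ Function.Injective g) :
    False := by
  classical
  -- totals of a and b agree
  have hsa : ∑ j, a j = 3 * (d - 1) := by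
    rw [sum_mult_eq d r ν a hν0 ha1 haν]; exact hν2
  have hsb : ∑ i, b i = 3 * (d - 1) := by
    rw [sum_mult_eq d r' μ b hμ0 hb1 hbμ]; exact hμ2
  -- clear the divisions by 2 in the merge equation
  have key : ∀ i : Fin r', b i * (b i + 1) =
      ∑ j ∈ Finset.univ.filter (fun j => g j = i), a j * (a j + 1) := by
    intro i
    have hb2 : 2 ∣ b i * (b i + 1) := (Nat.even_mul_succ_self (b i)).two_dvd
    have ha2 : ∀ j : Fin r, 2 ∣ a j * (a j + 1) :=
      fun j => (Nat.even_mul_succ_self (a j)).two_dvd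
    have := congrArg (2 * ·) (hmerge i)
    rw [Nat.mul_div_cancel' hb2, Finset.mul_sum] at this
    rw [this]
    exact Finset.sum_congr rfl fun j _ => Nat.mul_div_cancel' (ha2 j)
  -- S i : total multiplicity of group i
  set S : Fin r' → ℕ := fun i => ∑ j ∈ Finset.univ.filter (fun j => g j = i), a j
    with hS
  -- each a j in group i is at most S i
  have haS : ∀ i : Fin r', ∀ j ∈ Finset.univ.filter (fun j => g j = i), a j ≤ S i := by
    intro i j hj
    exact Finset.single_le_sum (fun _ _ => Nat.zero_le _) hj
  -- b i ≤ S i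
  have hbS : ∀ i, b i ≤ S i := by
    intro i
    apply le_of_mul_succ_le
    rw [key i]
    calc ∑ j ∈ Finset.univ.filter (fun j => g j = i), a j * (a j + 1)
        ≤ ∑ j ∈ Finset.univ.filter (fun j => g j = i), a j * (S i + 1) := by
          apply Finset.sum_le_sum
          intro j hj
          exact Nat.mul_le_mul_left _ (by have := haS i j hj; omega)
      _ = S i * (S i + 1) := by rw [← Finset.sum_mul]
  -- the non-injective group gives a strict inequality
  obtain ⟨j₁, j₂, hgj, hjne⟩ : ∃ j₁ j₂, g j₁ = g j₂ ∧ j₁ ≠ j₂ := by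
    simp only [Function.Injective, not_forall] at hgroup
    obtain ⟨x, y, h1, h2⟩ := hgroup
    exact ⟨x, y, h1, h2⟩
  set i₀ := g j₁ with hi₀
  have hj₁ : j₁ ∈ Finset.univ.filter (fun j => g j = i₀) := by simp [hi₀]
  have hj₂ : j₂ ∈ Finset.univ.filter (fun j => g j = i₀) := by simp [← hgj]
  have hpair : a j₁ + a j₂ ≤ S i₀ := by
    have hsub : ({j₁, j₂} : Finset (Fin r)) ⊆ Finset.univ.filter (fun j => g j = i₀) := by
      intro x hx
      rcases Finset.mem_insert.mp hx with h | h
      · subst h; exact hj₁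
      · rw [Finset.mem_singleton] at h; subst h; exact hj₂
    have := Finset.sum_le_sum_of_subset (f := a) hsub
    rwa [Finset.sum_pair hjne] at this
  have hstrict : b i₀ < S i₀ := by
    apply lt_of_mul_succ_lt
    rw [key i₀]
    calc ∑ j ∈ Finset.univ.filter (fun j => g j = i₀), a j * (a j + 1)
        < ∑ j ∈ Finset.univ.filter (fun j => g j = i₀), a j * (S i₀ + 1) := by
          apply Finset.sum_lt_sum
          · intro j hj
            exact Nat.mul_le_mul_left _ (by have := haS i₀ j hj; omega)
          · refine ⟨j₁, hj₁, ?_⟩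
            have h1 := ha1 j₁
            have h2 := ha1 j₂
            have : a j₁ < S i₀ := by omega
            exact Nat.mul_lt_mul_of_le_of_lt (le_refl _) (by omega) (by omega)
      _ = S i₀ * (S i₀ + 1) := by rw [← Finset.sum_mul]
  -- sum up: ∑ b < ∑ S = ∑ a, contradicting equal totals
  have hlt : ∑ i, b i < ∑ i, S i :=
    Finset.sum_lt_sum (fun i _ => hbS i) ⟨i₀, Finset.mem_univ i₀, hstrict⟩
  have hSsum : ∑ i, S i = ∑ j, a j := by
    rw [hS]
    exact Finset.sum_fiberwise_of_maps_to (fun j _ => Finset.mem_univ (g j)) a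
  rw [hSsum, hsa, hsb] at hlt
  exact lt_irrefl _ hlt
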